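/- (Existence of conditional distributions) Let (X,E) be a countably generated measurable space and (Y,F) a type B space. Then for every probability measure μ on the product space (X × Y, E ⊗ F) there exists a probability kernel π : X × F → ℝ≥0 (meaning π(x,·) is a probability measure on (Y,F) for each x ∈ X, and x ↦ π(x,F') is E-measurable for each F' ∈ F) such that μ(E' × F') = ∫_{E'} π(x,F') dμ₁(x) for all E' ∈ E and F' ∈ F, where μ₁ is the image of μ under the projection X × Y → X. -/

import Mathlib

open MeasureTheory

/-- A map `f : (X,E) → (Y,F)` between measurable spaces is *exactly measurable* if
`f⁻¹(F) = E`. -/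
def ExactlyMeasurable {X Y : Type*} [mX : MeasurableSpace X] [mY : MeasurableSpace Y]
    (f : X → Y) : Prop :=
  MeasurableSpace.comap f mY = mX

/-- A countably generated measurable space `(X,E)` is a *type B space* if there is an
exactly measurable map `f : (X,E) → (M,B)` into the Cantor space whose range is Borel. -/
def IsTypeB (X : Type*) [MeasurableSpace X] : Prop :=
  MeasurableSpace.CountablyGenerated X ∧
    ∃ f : X → (ℕ → Bool), ExactlyMeasurable f ∧ MeasurableSet (Set.range f)

/-- (Existence of conditional distributions) Let `(X,E)` be countably generated and
`(Y,F)` a type B space.  For every probability measure `μ` on `(X × Y, E ⊗ F)` there is a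
probability kernel `π : X × F → ℝ≥0` with
`μ(E' × F') = ∫_{E'} π(x,F') dμ₁(x)` for all `E' ∈ E`, `F' ∈ F`, where `μ₁` is the image
of `μ` under the projection onto `X`. -/
theorem stmt13 {X Y : Type*} [MeasurableSpace X] [MeasurableSpace Y]
    [MeasurableSpace.CountablyGenerated X] (hY : IsTypeB Y)
    (μ : Measure (X × Y)) (hμ : IsProbabilityMeasure μ) :
    ∃ π : X → Measure Y,
      (∀ x, IsProbabilityMeasure (π x)) ∧
      (∀ F' : Set Y, MeasurableSet F' → Measurable fun x => π x F') ∧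
      ∀ E' : Set X, ∀ F' : Set Y, MeasurableSet E' → MeasurableSet F' →
        μ (E' ×ˢ F') = ∫⁻ x in E', π x F' ∂(μ.map Prod.fst) := by
  classical
  obtain ⟨-, f, hf, hR⟩ := hY
  unfold ExactlyMeasurable at hf
  -- Y is nonempty
  have hne : Nonempty (X × Y) := by
    by_contra h
    rw [not_nonempty_iff] at h
    have := hμ.measure_univ
    rw [show (Set.univ : Set (X × Y)) = ∅ from Set.univ_eq_empty_iff.mpr h, measure_empty] at this
    exact zero_ne_one this
  obtain ⟨x₀, y₀⟩ := hne
  set R : Set (ℕ → Bool) := Set.range f with hRdef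
  -- f is measurable
  have hfm : Measurable f := by
    rw [measurable_iff_comap_le, hf]
  -- a measurable section g : M → Y
  set g : (ℕ → Bool) → Y := fun m => if h : m ∈ R then h.choose else y₀ with hgdef
  have hfg : ∀ m, f (g m) = if m ∈ R then m else f y₀ := by
    intro m
    by_cases h : m ∈ R
    · simp only [g, dif_pos h, if_pos h, h.choose_spec]
    · simp [g, dif_neg h, if_neg h]
  have hFm : Measurable (f ∘ g) := by
    have : f ∘ g = R.piecewise id (fun _ => f y₀) := by
      funext m
      by_cases h : m ∈ R <;> simp [hfg, h, Set.piecewise]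
    rw [this]
    exact Measurable.piecewise hR measurable_id measurable_const
  have hgm : Measurable g := by
    rw [measurable_iff_comap_le, ← hf, MeasurableSpace.comap_comp]
    exact fun s hs => by
      rw [MeasurableSpace.measurableSet_comap] at hs
      obtain ⟨s', hs', rfl⟩ := hs
      exact hFm hs'
  -- push μ to X × M
  have hpm : Measurable (Prod.map (id : X → X) f) := measurable_id.prodMap hfm
  set ν : Measure (X × (ℕ → Bool)) := μ.map (Prod.map id f) with hνdef
  haveI : IsProbabilityMeasure ν := Measure.isProbabilityMeasure_map hpm.aemeasurable
  have hνfst : ν.fst = μ.map Prod.fst := by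
    rw [Measure.fst, hνdef, Measure.map_map measurable_fst hpm]
    rfl
  set κ := ν.condKernel with hκdef
  -- the conditional kernel gives measure 1 to R a.e.
  have hκR : ∀ᵐ x ∂ν.fst, κ x R = 1 := by
    have h1 : ∫⁻ x, κ x R ∂ν.fst = 1 := by
      have := Measure.setLIntegral_condKernel_eq_measure_prod (ρ := ν)
        MeasurableSet.univ hR
      rw [Measure.restrict_univ] at this
      rw [this, hνdef, Measure.map_apply hpm (MeasurableSet.univ.prod hR)]
      have : Prod.map (id : X → X) f ⁻¹' (Set.univ ×ˢ R) = Set.univ := by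
        ext p; simp [R]
      rw [this, measure_univ]
    have hmeas : Measurable fun x => 1 - κ x R := by
      exact Measurable.sub measurable_const (ProbabilityTheory.Kernel.measurable_coe κ hR)
    have h0 : ∫⁻ x, (1 - κ x R) ∂ν.fst = 0 := by
      rw [lintegral_sub (ProbabilityTheory.Kernel.measurable_coe κ hR)
        (by rw [h1]; exact ENNReal.one_ne_top) (Filter.Eventually.of_forall fun x => prob_le_one)]
      rw [h1, lintegral_one, measure_univ, tsub_self]
    have := (lintegral_eq_zero_iff hmeas).mp h0
    filter_upwards [this] with x hx
    simp only [Pi.zero_apply] at hx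
    have hle : κ x R ≤ 1 := prob_le_one
    exact le_antisymm hle (tsub_eq_zero_iff_le.mp hx)
  set S : Set X := {x | κ x R = 1} with hSdef
  have hSm : MeasurableSet S :=
    (ProbabilityTheory.Kernel.measurable_coe κ hR) (measurableSet_singleton 1)
  set π : X → Measure Y := fun x => if x ∈ S then (κ x).map g else Measure.dirac y₀ with hπdef
  refine ⟨π, ?_, ?_, ?_⟩
  · intro x
    by_cases h : x ∈ S
    · simp only [π, if_pos h]
      exact Measure.isProbabilityMeasure_map hgm.aemeasurable
    · simp only [π, if_neg h]
      infer_instance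
  · intro F' hF'
    have : (fun x => π x F') = S.piecewise (fun x => κ x (g ⁻¹' F'))
        (fun _ => Measure.dirac y₀ F') := by
      funext x
      by_cases h : x ∈ S
      · simp [π, if_pos h, Set.piecewise, h, Measure.map_apply hgm hF']
      · simp [π, if_neg h, Set.piecewise, h]
    rw [this]
    exact Measurable.piecewise hSm
      (ProbabilityTheory.Kernel.measurable_coe κ (hgm hF')) measurable_const
  · intro E' F' hE' hF'
    obtain ⟨B', hB', hBpre⟩ : ∃ B', MeasurableSet B' ∧ f ⁻¹' B' = F' := by
      rw [← hf] at hF'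
      exact hF'
    have key : μ (E' ×ˢ F') = ∫⁻ x in E', κ x B' ∂ν.fst := by
      rw [Measure.setLIntegral_condKernel_eq_measure_prod hE' hB',
        hνdef, Measure.map_apply hpm (hE'.prod hB')]
      congr 1
      ext p
      simp [Set.mem_prod, ← hBpre]
    rw [key, hνfst]
    -- now a.e. equality on E'
    refine lintegral_congr_ae ?_
    have hae : ∀ᵐ x ∂(μ.map Prod.fst), κ x B' = π x F' := by
      rw [← hνfst]
      filter_upwards [hκR] with x hx
      have hxS : x ∈ S := hx
      have hcompl : κ x Rᶜ = 0 := by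
        have : κ x Rᶜ = 1 - κ x R := prob_compl_eq_one_sub hR
        rw [this, hx, tsub_self]
      simp only [π, if_pos hxS]
      rw [Measure.map_apply hgm hF']
      have h1 : κ x (g ⁻¹' F') = κ x (g ⁻¹' F' ∩ R) := (measure_inter_conull hcompl).symm
      have h2 : κ x B' = κ x (B' ∩ R) := (measure_inter_conull hcompl).symm
      have h3 : g ⁻¹' F' ∩ R = B' ∩ R := by
        ext m
        simp only [Set.mem_inter_iff, Set.mem_preimage, and_congr_left_iff]
        intro hm
        rw [← hBpre, Set.mem_preimage, hfg, if_pos hm]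
      rw [h1, h2, h3]
    exact ae_restrict_of_ae hae
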